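/- For each x ≥ 0, the evaluation functional δ_x : H → ℝ, f ↦ (ι f)(x), is continuous and linear; denoting by k_x ∈ H its Riesz representative, i.e. the unique element with ⟨k_x, f⟩_H = (ι f)(x) for all f ∈ H, the map ℝ≥0 → H, x ↦ k_x, is continuous. In particular, x ↦ k_x is locally Bochner integrable. -/

import Mathlib

open scoped NNReal RealInnerProductSpace
open Filter Topology MeasureTheory

theorem stmt3
    {H : Type*} [NormedAddCommGroup H] [InnerProductSpace ℝ H]
    [CompleteSpace H] [TopologicalSpace.SeparableSpace H]
    (ι : H →ₗ[ℝ] (ℝ≥0 → ℝ)) (hι : Function.Injective ι)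
    (hH1 : Continuous fun f : H => ι f 0)
    (S : ℝ≥0 → H →L[ℝ] H)
    (hshift : ∀ (h : ℝ≥0) (f : H) (x : ℝ≥0), ι (S h f) x = ι f (x + h))
    (hS0 : S 0 = ContinuousLinearMap.id ℝ H)
    (hSadd : ∀ a b : ℝ≥0, S (a + b) = (S a).comp (S b))
    (hScont : ∀ f : H, Continuous fun h : ℝ≥0 => S h f) :
    -- δ_x is continuous (it is linear since ι is linear)
    (∀ x : ℝ≥0, Continuous fun f : H => ι f x) ∧
    -- existence and uniqueness of the Riesz representative k_x
    (∀ x : ℝ≥0, ∃! k : H, ∀ f : H, ⟪k, f⟫ = ι f x) ∧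
    -- x ↦ k_x is continuous and locally Bochner integrable
    (∀ k : ℝ≥0 → H, (∀ (x : ℝ≥0) (f : H), ⟪k x, f⟫ = ι f x) →
      Continuous k ∧
      ∀ x₁ : ℝ, IntegrableOn (fun x : ℝ => k x.toNNReal) (Set.Icc 0 x₁)) := by
  have hev : ∀ (x : ℝ≥0) (f : H), ι f x = ι (S x f) 0 := by
    intro x f; rw [hshift x f 0, zero_add]
  have hδcont : ∀ x : ℝ≥0, Continuous fun f : H => ι f x := by
    intro x
    have he : (fun f : H => ι f x) = fun f => ι (S x f) 0 := funext fun f => hev x f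
    rw [he]; exact hH1.comp (S x).continuous
  refine ⟨hδcont, ?_, ?_⟩
  · -- Riesz representation
    intro x
    let δ : H →L[ℝ] ℝ :=
      { toLinearMap := (LinearMap.proj x).comp (ι : H →ₗ[ℝ] (ℝ≥0 → ℝ))
        cont := hδcont x }
    refine ⟨(InnerProductSpace.toDual ℝ H).symm δ, fun f => ?_, fun k' hk' => ?_⟩
    · exact (InnerProductSpace.toDual_symm_apply (y := δ) (x := f) : ⟪_, f⟫ = δ f)
    · apply ext_inner_right ℝ
      intro f
      rw [hk' f]
      exact ((InnerProductSpace.toDual_symm_apply (y := δ) (x := f)) : ⟪_, f⟫ = δ f).symm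
  · -- main part
    intro k hk
    set A : ℝ≥0 → H →L[ℝ] H := fun x => ContinuousLinearMap.adjoint (S x) with hA
    have hAnorm : ∀ x, ‖A x‖ = ‖S x‖ := fun x =>
      LinearIsometryEquiv.norm_map ContinuousLinearMap.adjoint (S x)
    have hk_eq : ∀ x, k x = A x (k 0) := by
      intro x; apply ext_inner_right ℝ; intro f
      rw [hk x f, hev x f, hA]
      rw [ContinuousLinearMap.adjoint_inner_left, hk 0 (S x f)]
    have hM : ∀ t : ℝ≥0, ∃ M : ℝ, 0 ≤ M ∧ ∀ z : ℝ≥0, z ≤ t → ‖S z‖ ≤ M := by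
      intro t
      have hpt : ∀ f : H, ∃ C, ∀ z : Set.Icc (0:ℝ≥0) t, ‖S z.1 f‖ ≤ C := by
        intro f
        obtain ⟨C, hC⟩ := (isCompact_Icc (a := (0:ℝ≥0)) (b := t)).exists_bound_of_continuousOn
          (hScont f).continuousOn
        exact ⟨C, fun z => hC z z.2⟩
      obtain ⟨M, hMle⟩ := banach_steinhaus hpt
      exact ⟨max M 0, le_max_right _ _,
        fun z hz => (hMle ⟨z, ⟨zero_le, hz⟩⟩).trans (le_max_left _ _)⟩
    have hknorm : ∀ z : ℝ≥0, ‖k z‖ ≤ ‖S z‖ * ‖k 0‖ := by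
      intro z; rw [hk_eq z]
      calc ‖A z (k 0)‖ ≤ ‖A z‖ * ‖k 0‖ := (A z).le_opNorm _
        _ = ‖S z‖ * ‖k 0‖ := by rw [hAnorm]
    have hwc : ∀ f : H, Continuous fun x : ℝ≥0 => ι f x := by
      intro f
      have he : (fun x : ℝ≥0 => ι f x) = fun x => ι (S x f) 0 := funext fun x => hev x f
      rw [he]; exact hH1.comp (hScont f)
    set φ : H → ℝ → ℝ := fun f s => ι f s.toNNReal with hφ
    have hφc : ∀ f, Continuous (φ f) := fun f => (hwc f).comp continuous_real_toNNReal
    have hφshift : ∀ (h : ℝ≥0) (f : H) (s : ℝ), 0 ≤ s → φ (S h f) s = φ f (s + (h:ℝ)) := by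
      intro h f s hs
      have h1 : ((s + (h:ℝ)).toNNReal) = s.toNNReal + h := by
        rw [Real.toNNReal_add hs h.coe_nonneg, Real.toNNReal_coe]
      simp only [hφ]
      rw [hshift h f s.toNNReal, h1]
    have hφbound : ∀ (f : H) (s : ℝ) (M : ℝ), ‖S s.toNNReal‖ ≤ M → |φ f s| ≤ M * ‖k 0‖ * ‖f‖ := by
      intro f s M hMs
      have h1 : φ f s = ⟪k s.toNNReal, f⟫ := (hk _ f).symm
      rw [h1]
      calc |⟪k s.toNNReal, f⟫| ≤ ‖k s.toNNReal‖ * ‖f‖ := abs_real_inner_le_norm _ _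
        _ ≤ (M * ‖k 0‖) * ‖f‖ := by
            apply mul_le_mul_of_nonneg_right _ (norm_nonneg f)
            exact (hknorm _).trans (mul_le_mul_of_nonneg_right hMs (norm_nonneg _))
    have hIntble : ∀ (f : H) (a b : ℝ), IntervalIntegrable (φ f) volume a b :=
      fun f a b => (hφc f).intervalIntegrable a b
    obtain ⟨v, hv⟩ : ∃ v : ℝ → H, ∀ t : ℝ, 0 ≤ t → ∀ f, ⟪v t, f⟫ = ∫ s in (0:ℝ)..t, φ f s := by
      have hvex : ∀ t : ℝ, 0 ≤ t → ∃ w : H, ∀ f : H, ⟪w, f⟫ = ∫ s in (0:ℝ)..t, φ f s := by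
        intro t ht
        obtain ⟨M, hM0, hMt⟩ := hM t.toNNReal
        let L : H →ₗ[ℝ] ℝ :=
          { toFun := fun f => ∫ s in (0:ℝ)..t, φ f s
            map_add' := fun f g => by
              simp only [hφ, map_add, Pi.add_apply]
              exact intervalIntegral.integral_add (hIntble f 0 t) (hIntble g 0 t)
            map_smul' := fun c f => by
              simp only [hφ, _root_.map_smul, Pi.smul_apply, smul_eq_mul, RingHom.id_apply]
              exact intervalIntegral.integral_const_mul c _ }
        have hLb : ∀ f : H, ‖L f‖ ≤ M * ‖k 0‖ * t * ‖f‖ := by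
          intro f
          have hb : ∀ s ∈ Set.uIoc (0:ℝ) t, ‖φ f s‖ ≤ M * ‖k 0‖ * ‖f‖ := by
            intro s hs
            rw [Set.uIoc_of_le ht] at hs
            rw [Real.norm_eq_abs]
            exact hφbound f s M (hMt _ (Real.toNNReal_le_toNNReal hs.2))
          have h2 := intervalIntegral.norm_integral_le_of_norm_le_const hb
          rw [sub_zero, abs_of_nonneg ht] at h2
          calc ‖L f‖ ≤ M * ‖k 0‖ * ‖f‖ * t := h2
            _ = M * ‖k 0‖ * t * ‖f‖ := by ring
        let Lc : H →L[ℝ] ℝ := L.mkContinuous (M * ‖k 0‖ * t) hLb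
        refine ⟨(InnerProductSpace.toDual ℝ H).symm Lc, fun f => ?_⟩
        exact (InnerProductSpace.toDual_symm_apply (y := Lc) (x := f) : ⟪_, f⟫ = Lc f)
      refine ⟨fun t => if ht : 0 ≤ t then (hvex t ht).choose else 0, fun t ht f => ?_⟩
      simp only [dif_pos ht]
      exact (hvex t ht).choose_spec f
    set F : Submodule ℝ H :=
      { carrier := {g : H | Tendsto (fun h : ℝ≥0 => A h g) (𝓝 0) (𝓝 g)}
        add_mem' := fun {a b} ha hb => by
          simp only [Set.mem_setOf_eq, map_add] at *
          exact ha.add hb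
        zero_mem' := by
          simp only [Set.mem_setOf_eq, map_zero]
          exact tendsto_const_nhds
        smul_mem' := fun c a ha => by
          simp only [Set.mem_setOf_eq, _root_.map_smul] at *
          exact ha.const_smul c } with hFdef
    obtain ⟨M₁, hM₁0, hM₁⟩ := hM 1
    have hFclosed : IsClosed (F : Set H) := by
      apply IsSeqClosed.isClosed
      intro g gl hg hgl
      rw [SetLike.mem_coe, Submodule.mem_mk, AddSubmonoid.mem_mk, AddSubsemigroup.mem_mk,
        Set.mem_setOf_eq]
      rw [Metric.tendsto_nhds]
      intro ε hε
      obtain ⟨n, hn⟩ : ∃ n, ‖g n - gl‖ < ε / (2 * (M₁ + 1)) := by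
        have h2 : (0:ℝ) < ε / (2 * (M₁ + 1)) := by positivity
        obtain ⟨n, hn⟩ := (Metric.tendsto_atTop.mp hgl _ h2)
        exact ⟨n, by simpa [dist_eq_norm] using hn n le_rfl⟩
      have h1 : ∀ᶠ h : ℝ≥0 in 𝓝 0, dist (A h (g n)) (g n) < ε / 2 :=
        (Metric.tendsto_nhds.mp (hg n)) _ (by positivity)
      have h2 : ∀ᶠ h : ℝ≥0 in 𝓝 0, h < 1 := Iio_mem_nhds one_pos
      filter_upwards [h1, h2] with h hd hlt
      have hb : ‖A h (g n - gl)‖ ≤ M₁ * ‖g n - gl‖ := by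
        calc ‖A h (g n - gl)‖ ≤ ‖A h‖ * ‖g n - gl‖ := (A h).le_opNorm _
          _ ≤ M₁ * ‖g n - gl‖ := by
              apply mul_le_mul_of_nonneg_right _ (norm_nonneg _)
              rw [hAnorm]; exact hM₁ h hlt.le
      have key : dist (A h gl) gl ≤ ‖A h (g n - gl)‖ + dist (A h (g n)) (g n) + ‖g n - gl‖ := by
        have e1 : A h gl - gl = -(A h (g n - gl)) + (A h (g n) - g n) + (g n - gl) := by
          simp only [map_sub]; abel
        rw [dist_eq_norm, dist_eq_norm, e1]
        exact (norm_add_le _ _).trans (add_le_add_left ((norm_add_le _ _).trans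
          (add_le_add_left (norm_neg _).le _)) _)
      have hM1pos : (0:ℝ) < M₁ + 1 := by linarith
      calc dist (A h gl) gl ≤ ‖A h (g n - gl)‖ + dist (A h (g n)) (g n) + ‖g n - gl‖ := key
        _ ≤ M₁ * ‖g n - gl‖ + ε / 2 + ‖g n - gl‖ := by
            exact add_le_add (add_le_add hb hd.le) le_rfl
        _ = (M₁ + 1) * ‖g n - gl‖ + ε / 2 := by ring
        _ < (M₁ + 1) * (ε / (2 * (M₁ + 1))) + ε / 2 := by
            have := mul_lt_mul_of_pos_left hn hM1pos
            linarith
        _ = ε := by field_simp; ring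
    have hvF : ∀ t : ℝ, 0 < t → v t ∈ F := by
      intro t ht
      obtain ⟨M, hM0, hMt⟩ := hM ((t+1).toNNReal)
      set C : ℝ := M * ‖k 0‖ with hC
      have hC0 : 0 ≤ C := mul_nonneg hM0 (norm_nonneg _)
      have hest : ∀ h : ℝ≥0, (h:ℝ) ≤ 1 → ‖A h (v t) - v t‖ ≤ 2 * C * h := by
        intro h hh1
        have hkey : ∀ f : H, ⟪A h (v t) - v t, f⟫
            = (∫ s in t..(t+(h:ℝ)), φ f s) - ∫ s in (0:ℝ)..(h:ℝ), φ f s := by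
          intro f
          rw [inner_sub_left, hA]
          rw [ContinuousLinearMap.adjoint_inner_left]
          rw [hv t ht.le (S h f), hv t ht.le f]
          have e1 : ∫ s in (0:ℝ)..t, φ (S h f) s = ∫ s in (0:ℝ)..t, φ f (s + (h:ℝ)) := by
            apply intervalIntegral.integral_congr
            intro s hs
            rw [Set.uIcc_of_le ht.le] at hs
            exact hφshift h f s hs.1
          have e2 : (∫ s in (0:ℝ)..t, φ f (s + (h:ℝ)))
              = ∫ s in ((0:ℝ)+(h:ℝ))..(t+(h:ℝ)), φ f s :=
            intervalIntegral.integral_comp_add_right (a := 0) (b := t) (φ f) (h:ℝ)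
          have e3 : (∫ s in ((h:ℝ))..t, φ f s) + ∫ s in t..(t+(h:ℝ)), φ f s
              = ∫ s in ((h:ℝ))..(t+(h:ℝ)), φ f s :=
            intervalIntegral.integral_add_adjacent_intervals (hIntble f _ _) (hIntble f _ _)
          have e4 : (∫ s in (0:ℝ)..(h:ℝ), φ f s) + ∫ s in ((h:ℝ))..t, φ f s
              = ∫ s in (0:ℝ)..t, φ f s :=
            intervalIntegral.integral_add_adjacent_intervals (hIntble f _ _) (hIntble f _ _)
          rw [e1, e2, zero_add] at *
          linarith [e3, e4]
        have hbnd : ∀ f : H, |⟪A h (v t) - v t, f⟫| ≤ 2 * C * h * ‖f‖ := by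
          intro f
          rw [hkey f]
          have hb1 : ‖∫ s in t..(t+(h:ℝ)), φ f s‖ ≤ (C * ‖f‖) * |(t+(h:ℝ)) - t| := by
            apply intervalIntegral.norm_integral_le_of_norm_le_const
            intro s hs
            rw [Set.uIoc_of_le (by linarith [h.coe_nonneg] : t ≤ t + (h:ℝ))] at hs
            rw [Real.norm_eq_abs, hC]
            refine hφbound f s M (hMt _ (Real.toNNReal_le_toNNReal (by linarith [hs.2])))
          have hb2 : ‖∫ s in (0:ℝ)..(h:ℝ), φ f s‖ ≤ (C * ‖f‖) * |(h:ℝ) - 0| := by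
            apply intervalIntegral.norm_integral_le_of_norm_le_const
            intro s hs
            rw [Set.uIoc_of_le h.coe_nonneg] at hs
            rw [Real.norm_eq_abs, hC]
            refine hφbound f s M (hMt _ (Real.toNNReal_le_toNNReal (by linarith [hs.2])))
          rw [Real.norm_eq_abs] at hb1 hb2
          rw [show (t+(h:ℝ)) - t = (h:ℝ) by ring, abs_of_nonneg h.coe_nonneg] at hb1
          rw [sub_zero, abs_of_nonneg h.coe_nonneg] at hb2
          calc |(∫ s in t..(t+(h:ℝ)), φ f s) - ∫ s in (0:ℝ)..(h:ℝ), φ f s|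
              ≤ |∫ s in t..(t+(h:ℝ)), φ f s| + |∫ s in (0:ℝ)..(h:ℝ), φ f s| := abs_sub _ _
            _ ≤ C * ‖f‖ * h + C * ‖f‖ * h := add_le_add hb1 hb2
            _ = 2 * C * h * ‖f‖ := by ring
        set g : H := A h (v t) - v t with hg
        have h1 : ‖g‖ * ‖g‖ ≤ 2 * C * h * ‖g‖ := by
          have h2 := hbnd g
          rwa [real_inner_self_eq_norm_mul_norm,
            abs_of_nonneg (mul_nonneg (norm_nonneg g) (norm_nonneg g))] at h2
        rcases eq_or_lt_of_le (norm_nonneg g) with hg0 | hg0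
        · rw [← hg0]; positivity
        · exact le_of_mul_le_mul_right h1 hg0
      rw [hFdef]
      show Tendsto (fun h : ℝ≥0 => A h (v t)) (𝓝 0) (𝓝 (v t))
      rw [tendsto_iff_norm_sub_tendsto_zero]
      apply squeeze_zero' (Eventually.of_forall fun h => norm_nonneg _)
      · filter_upwards [Iio_mem_nhds (one_pos : (0:ℝ≥0) < 1)] with h hlt
        exact hest h (by exact_mod_cast hlt.le)
      · have : Tendsto (fun h : ℝ≥0 => 2 * C * (h:ℝ)) (𝓝 0) (𝓝 (2 * C * ((0:ℝ≥0):ℝ))) :=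
          (continuous_const.mul NNReal.continuous_coe).tendsto 0
        simpa using this
    have hk0F : k 0 ∈ F := by
      haveI : CompleteSpace F := hFclosed.completeSpace_coe
      set P : H := (F.orthogonalProjection (k 0) : H) with hP
      set w : H := k 0 - P with hw
      have hwOrth : w ∈ Fᗮ := Submodule.sub_starProjection_mem_orthogonal (K := F) (k 0)
      have hφw0 : φ w 0 = 0 := by
        have hzero : ∀ t : ℝ, 0 < t → (∫ s in (0:ℝ)..t, φ w s) = 0 := by
          intro t ht
          rw [← hv t ht.le w]
          exact Submodule.inner_right_of_mem_orthogonal (hvF t ht) hwOrth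
        by_contra hne
        obtain ⟨δ, hδ0, hδ⟩ := Metric.continuous_iff.mp (hφc w) 0 (|φ w 0| / 2) (by positivity)
        set t := δ/2 with htdef
        have ht0 : (0:ℝ) < t := by positivity
        have h1 : ∀ s ∈ Set.uIoc (0:ℝ) t, ‖φ w s - φ w 0‖ ≤ |φ w 0| / 2 := by
          intro s hs
          rw [Set.uIoc_of_le ht0.le] at hs
          have hd : dist s 0 < δ := by
            rw [Real.dist_eq, sub_zero, abs_of_nonneg hs.1.le]; linarith [hs.2]
          have h3 := hδ s hd
          rw [Real.dist_eq] at h3; rw [Real.norm_eq_abs]; linarith [h3.le]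
        have h2 := intervalIntegral.norm_integral_le_of_norm_le_const h1
        rw [intervalIntegral.integral_sub (hIntble w 0 t) intervalIntegrable_const,
          hzero t ht0, intervalIntegral.integral_const] at h2
        rw [zero_sub, norm_neg, sub_zero, smul_eq_mul, Real.norm_eq_abs, abs_mul,
          abs_of_nonneg ht0.le] at h2
        have h4 : 0 < |φ w 0| := abs_pos.mpr hne
        nlinarith
      have hwk0 : ⟪w, k 0⟫ = 0 := by
        have h5 : ⟪k 0, w⟫ = φ w 0 := by
          rw [hk 0 w]; simp [hφ, Real.toNNReal_zero]
        rw [real_inner_comm, h5, hφw0]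
      have hwP : ⟪w, P⟫ = 0 := by
        rw [real_inner_comm]
        exact Submodule.inner_right_of_mem_orthogonal (F.orthogonalProjection (k 0)).2 hwOrth
      have hw0 : w = 0 := by
        apply @inner_self_eq_zero ℝ _ _ _ _ w |>.mp
        have h6 : ⟪w, k 0 - P⟫ = 0 := by rw [inner_sub_right, hwk0, hwP]; ring
        rwa [← hw] at h6
      have h7 : k 0 = P := sub_eq_zero.mp (hw ▸ hw0)
      rw [h7]; exact (F.orthogonalProjection (k 0)).2
    have hk0tend : Tendsto (fun h : ℝ≥0 => k h) (𝓝 0) (𝓝 (k 0)) := by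
      have h8 : (fun h : ℝ≥0 => k h) = fun h : ℝ≥0 => A h (k 0) := funext fun h => hk_eq h
      rw [h8]
      exact hk0F
    have hkcont : Continuous k := by
      rw [Metric.continuous_iff]
      intro x ε hε
      obtain ⟨M, hM0, hMx⟩ := hM (x + 1)
      have hεM : 0 < ε / (M + 1) := by positivity
      obtain ⟨δ, hδ0, hδ⟩ := Metric.eventually_nhds_iff.mp
        (Metric.tendsto_nhds.mp hk0tend _ hεM)
      refine ⟨δ, hδ0, fun y hyx => ?_⟩
      have hMε : M * (ε / (M + 1)) < ε := by
        have h9 : M / (M + 1) < 1 := (div_lt_one (by linarith)).mpr (by linarith)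
        calc M * (ε / (M + 1)) = (M / (M + 1)) * ε := by ring
          _ < 1 * ε := mul_lt_mul_of_pos_right h9 hε
          _ = ε := one_mul ε
      rcases le_total x y with hxy | hyx'
      · set d : ℝ≥0 := y - x with hd
        have hyd : y = x + d := (add_tsub_cancel_of_le hxy).symm
        have hdy : (d:ℝ) = (y:ℝ) - (x:ℝ) := by
          rw [hd, NNReal.coe_sub hxy]
        have hdd : dist d 0 < δ := by
          have : dist d 0 = dist y x := by
            rw [NNReal.dist_eq, NNReal.dist_eq, hdy, NNReal.coe_zero, sub_zero]
          rw [this]; exact hyx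
        have hky : k y = A x (k d) := by
          rw [hyd, hk_eq (x + d), hk_eq d]
          have hc : S (x + d) = (S d).comp (S x) := by rw [add_comm]; exact hSadd d x
          rw [hA]
          simp only [hc, ContinuousLinearMap.adjoint_comp, ContinuousLinearMap.comp_apply]
        have hkd : dist (k d) (k 0) < ε / (M + 1) := hδ hdd
        rw [dist_eq_norm] at hkd ⊢
        rw [hky, hk_eq x, ← map_sub]
        calc ‖A x (k d - k 0)‖ ≤ ‖A x‖ * ‖k d - k 0‖ := (A x).le_opNorm _
          _ ≤ M * ‖k d - k 0‖ := by
              apply mul_le_mul_of_nonneg_right _ (norm_nonneg _)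
              rw [hAnorm]; exact hMx x (le_add_right le_rfl)
          _ ≤ M * (ε / (M + 1)) := mul_le_mul_of_nonneg_left hkd.le hM0
          _ < ε := hMε
      · set d : ℝ≥0 := x - y with hd
        have hyd : x = y + d := (add_tsub_cancel_of_le hyx').symm
        have hdy : (d:ℝ) = (x:ℝ) - (y:ℝ) := by
          rw [hd, NNReal.coe_sub hyx']
        have hdd : dist d 0 < δ := by
          have : dist d 0 = dist y x := by
            rw [NNReal.dist_eq, NNReal.dist_eq, hdy, NNReal.coe_zero, sub_zero, abs_sub_comm]
          rw [this]; exact hyx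
        have hkx : k x = A y (k d) := by
          rw [hyd, hk_eq (y + d), hk_eq d]
          have hc : S (y + d) = (S d).comp (S y) := by rw [add_comm]; exact hSadd d y
          rw [hA]
          simp only [hc, ContinuousLinearMap.adjoint_comp, ContinuousLinearMap.comp_apply]
        have hkd : dist (k d) (k 0) < ε / (M + 1) := hδ hdd
        rw [dist_eq_norm] at hkd ⊢
        rw [hkx, hk_eq y, ← map_sub]
        calc ‖A y (k 0 - k d)‖ ≤ ‖A y‖ * ‖k 0 - k d‖ := (A y).le_opNorm _
          _ ≤ M * ‖k 0 - k d‖ := by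
              apply mul_le_mul_of_nonneg_right _ (norm_nonneg _)
              rw [hAnorm]; exact hMx y (hyx'.trans (le_add_right le_rfl))
          _ ≤ M * (ε / (M + 1)) := by
              rw [norm_sub_rev]
              exact mul_le_mul_of_nonneg_left hkd.le hM0
          _ < ε := hMε
    exact ⟨hkcont, fun x₁ => (hkcont.comp continuous_real_toNNReal).integrableOn_Icc⟩
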